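/- arXiv:0805.1088 — 3 statements merged into one kernel-verified Lean document; each statement's English description precedes it below -/
import Mathlib

section
/- For all positive integers K and N and every i ∈ {1,…,N}, the subgraph of the enhanced conflict graph G_{K,N} induced by the vertex set consisting of all broadcast vertices b_{kj} (k ∈ {1,…,K}, j ∈ {1,…,N}) together with the unicast vertices u_{ki} (k ∈ {1,…,K}) destined to output i is a perfect graph. -/
open SimpleGraph Pointwise

/-- Vertex set of the enhanced conflict graph `G_{K,N}`: `(false, i, j)` is the unicast vertex
`u_{ij}` (input `i`, output `j`), and `(true, i, j)` is the broadcast (subflow) vertex `b_{ij}`. -/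
abbrev CGVert (K N : ℕ) := Bool × Fin K × Fin N

/-- The enhanced conflict graph `G_{K,N}` of a `K × N` switch with unicast and broadcast traffic:
two distinct vertices are adjacent iff they share an input and at least one of them is a unicast,
or they share an output and come from different inputs. -/
def ECG (K N : ℕ) : SimpleGraph (CGVert K N) where
  Adj v w := v ≠ w ∧
    ((v.2.1 = w.2.1 ∧ (v.1 = false ∨ w.1 = false)) ∨
     (v.2.2 = w.2.2 ∧ v.2.1 ≠ w.2.1))
  symm := by
    constructor
    rintro v w ⟨hne, h⟩
    refine ⟨hne.symm, ?_⟩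
    rcases h with ⟨h1, h2⟩ | ⟨h1, h2⟩
    · exact Or.inl ⟨h1.symm, h2.symm⟩
    · exact Or.inr ⟨h1.symm, h2.symm⟩
  loopless := ⟨fun v h => h.1 rfl⟩

/-- The stable set polytope of a graph: the convex hull of the 0/1 indicator vectors of the
independent (stable) sets. -/
def STAB {V : Type*} (G : SimpleGraph V) : Set (V → ℝ) :=
  convexHull ℝ {x | ∃ S : Set V, (∀ v ∈ S, ∀ w ∈ S, ¬ G.Adj v w) ∧
    x = S.indicator (fun _ => (1 : ℝ))}

/-- The fractional stable set polytope of a graph: nonnegative vectors whose sum over every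
clique is at most `1`. -/
def QSTAB {V : Type*} (G : SimpleGraph V) : Set (V → ℝ) :=
  {x | (∀ v, 0 ≤ x v) ∧ ∀ Q : Finset V, G.IsClique (Q : Set V) → ∑ v ∈ Q, x v ≤ 1}

/-- A graph is perfect if every induced subgraph has chromatic number equal to its clique
number. -/
def SimpleGraph.IsPerfect {V : Type*} (G : SimpleGraph V) : Prop :=
  ∀ S : Set V, (G.induce S).chromaticNumber = ((G.induce S).cliqueNum : ℕ∞)

/-- A graph has an odd hole if some induced subgraph is a chordless cycle of odd length at
least 5. -/
def SimpleGraph.HasOddHole {V : Type*} (G : SimpleGraph V) : Prop :=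
  ∃ (n : ℕ) (S : Set V), 5 ≤ n ∧ Odd n ∧ Nonempty (G.induce S ≃g cycleGraph n)

lemma chromEq {V : Type*} [Finite V] {G : SimpleGraph V}
    (h : G.Colorable G.cliqueNum) :
    G.chromaticNumber = (G.cliqueNum : ℕ∞) := by
  cases nonempty_fintype V
  refine le_antisymm h.chromaticNumber_le ?_
  obtain ⟨s, hs⟩ := G.exists_isNClique_cliqueNum
  rw [← hs.card_eq]
  exact hs.isClique.card_le_chromaticNumber

set_option maxHeartbeats 1000000 in
lemma key (K N : ℕ) (i : Fin N)
    (S : Set ↥({v : CGVert K N | v.1 = true ∨ v.2.2 = i})) :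
    (((ECG K N).induce {v : CGVert K N | v.1 = true ∨ v.2.2 = i}).induce S).Colorable
      (((ECG K N).induce {v : CGVert K N | v.1 = true ∨ v.2.2 = i}).induce S).cliqueNum := by
  classical
  set H : SimpleGraph ↥S :=
    ((ECG K N).induce {v : CGVert K N | v.1 = true ∨ v.2.2 = i}).induce S with hHdef
  haveI : Fintype ↥S := Fintype.ofFinite _
  set ω := H.cliqueNum with hω
  -- trivial case: empty vertex set
  rcases isEmpty_or_nonempty ↥S with hE | hNE
  · exact ⟨⟨fun v => (hE.false v).elim, fun {v} => (hE.false v).elim⟩⟩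
  -- adjacency unfolding
  have hAdj : ∀ x y : ↥S, H.Adj x y ↔ (x.1.1 ≠ y.1.1 ∧
      ((x.1.1.2.1 = y.1.1.2.1 ∧ (x.1.1.1 = false ∨ y.1.1.1 = false)) ∨
       (x.1.1.2.2 = y.1.1.2.2 ∧ x.1.1.2.1 ≠ y.1.1.2.1))) := fun x y => Iff.rfl
  have hTm : ∀ x : ↥S, x.1.1.1 = true ∨ x.1.1.2.2 = i := fun x => x.1.2
  have hval : ∀ x y : ↥S, x.1.1 = y.1.1 → x = y :=
    fun x y h => Subtype.ext (Subtype.ext h)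
  -- the output cliques
  set B : Fin N → Finset ↥S := fun j => Finset.univ.filter (fun w => w.1.1.2.2 = j) with hB
  have hmemB : ∀ (j) (w : ↥S), w ∈ B j ↔ w.1.1.2.2 = j := by
    intro j w; simp [hB]
  have hclique : ∀ j, H.IsClique (B j : Set ↥S) := by
    intro j x hx y hy hxy
    rw [Finset.mem_coe, hmemB] at hx hy
    have hpv : x.1.1 ≠ y.1.1 := fun h => hxy (hval _ _ h)
    rw [hAdj]
    refine ⟨hpv, ?_⟩
    by_cases hk : x.1.1.2.1 = y.1.1.2.1
    · left
      refine ⟨hk, ?_⟩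
      have hout : x.1.1.2.2 = y.1.1.2.2 := hx.trans hy.symm
      have hbne : x.1.1.1 ≠ y.1.1.1 := by
        intro hb
        exact hpv (Prod.ext hb (Prod.ext hk hout))
      rcases Bool.eq_false_or_eq_true x.1.1.1 with hxb | hxb
      · rcases Bool.eq_false_or_eq_true y.1.1.1 with hyb | hyb
        · exact absurd (hxb.trans hyb.symm) hbne
        · exact Or.inr hyb
      · exact Or.inl hxb
    · exact Or.inr ⟨hx.trans hy.symm, hk⟩
  have hcard : ∀ j, (B j).card ≤ ω := by
    intro j
    exact IsClique.card_le_cliqueNum (tc := hclique j)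
  -- 1 ≤ ω
  have hω1 : 1 ≤ ω := by
    obtain ⟨w⟩ := hNE
    have h1 : H.IsClique ({w} : Finset ↥S) := by
      rw [Finset.coe_singleton]; exact H.isClique_singleton w
    have := IsClique.card_le_cliqueNum (tc := h1)
    simpa using this
  -- coloring of the central clique B i
  have hcAex : ∃ cA : ↥(B i) → Fin ω, Function.Injective cA := by
    refine ⟨fun x => Fin.castLE (hcard i) ((Fintype.equivFinOfCardEq (Fintype.card_coe (B i))) x), ?_⟩
    intro a b hab
    exact (Fintype.equivFinOfCardEq (Fintype.card_coe (B i))).injective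
      (Fin.castLE_injective _ hab)
  obtain ⟨cA, hcA⟩ := hcAex
  -- forbidden colors
  set F : ↥S → Finset (Fin ω) := fun w =>
    ((B i).attach.filter (fun u => u.1.1.1 = (false, w.1.1.2.1, i))).image cA with hF
  have hFmem : ∀ (w : ↥S) (c : Fin ω), c ∈ F w ↔
      ∃ u : ↥(B i), u.1.1.1 = (false, w.1.1.2.1, i) ∧ cA u = c := by
    intro w c
    constructor
    · intro hc
      obtain ⟨u, hu, rfl⟩ := Finset.mem_image.mp hc
      exact ⟨u, (Finset.mem_filter.mp hu).2, rfl⟩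
    · rintro ⟨u, hu, rfl⟩
      exact Finset.mem_image.mpr ⟨u, Finset.mem_filter.mpr ⟨Finset.mem_attach _ _, hu⟩, rfl⟩
  -- forbidden sets have at most one element
  have hFone : ∀ w : ↥S, (F w).card ≤ 1 := by
    intro w
    rw [Finset.card_le_one]
    intro a ha b hb
    rw [hFmem] at ha hb
    obtain ⟨u, hu1, hu2⟩ := ha
    obtain ⟨u', hu1', hu2'⟩ := hb
    have : u = u' := Subtype.ext (hval _ _ (hu1.trans hu1'.symm))
    rw [← hu2, ← hu2', this]
  -- nonempty forbidden set gives ω ≥ 2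
  have hF2 : ∀ j, j ≠ i → ∀ w : ↥S, w ∈ B j → (F w).Nonempty → 2 ≤ ω := by
    intro j hj w hw hFw
    obtain ⟨c, hc⟩ := hFw
    rw [hFmem] at hc
    obtain ⟨u, hu1, -⟩ := hc
    have hwj : w.1.1.2.2 = j := (hmemB j w).mp hw
    have hune : u.1 ≠ w := by
      intro h
      have h2 : u.1.1.1.2.2 = i := by rw [hu1]
      rw [h, hwj] at h2
      exact hj h2
    have hadj : H.Adj u.1 w := by
      rw [hAdj]
      refine ⟨fun h => hune (hval _ _ h), Or.inl ⟨?_, Or.inl ?_⟩⟩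
      · rw [hu1]
      · rw [hu1]
    have hcl : H.IsClique ({u.1, w} : Finset ↥S) := by
      rw [Finset.coe_pair, H.isClique_pair]
      exact fun _ => hadj
    have := IsClique.card_le_cliqueNum (tc := hcl)
    rwa [Finset.card_pair hune] at this
  -- distinct vertices in B j (j ≠ i) have disjoint forbidden sets
  have hFdisj : ∀ j, j ≠ i → ∀ w w' : ↥S, w ∈ B j → w' ∈ B j → w ≠ w' →
      ∀ c, c ∈ F w → c ∉ F w' := by
    intro j hj w w' hw hw' hne c hc hc'
    rw [hFmem] at hc hc'
    obtain ⟨u, hu1, hu2⟩ := hc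
    obtain ⟨u', hu1', hu2'⟩ := hc'
    have huu : u = u' := hcA (hu2.trans hu2'.symm)
    subst huu
    have hk : w.1.1.2.1 = w'.1.1.2.1 :=
      (Prod.ext_iff.mp (Prod.ext_iff.mp (hu1.symm.trans hu1')).2).1
    have hwj : w.1.1.2.2 = j := (hmemB j w).mp hw
    have hwj' : w'.1.1.2.2 = j := (hmemB j w').mp hw'
    have hbw : w.1.1.1 = true := by
      rcases hTm w with h | h
      · exact h
      · exact absurd (hwj.symm.trans h) hj
    have hbw' : w'.1.1.1 = true := by
      rcases hTm w' with h | h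
      · exact h
      · exact absurd (hwj'.symm.trans h) hj
    exact hne (hval _ _ (Prod.ext (hbw.trans hbw'.symm)
      (Prod.ext hk (hwj.trans hwj'.symm))))
  -- existence of good colorings on each B j
  have hG : ∀ j : Fin N, ∃ g : ↥S → Fin ω,
      (j ≠ i → Set.InjOn g (B j)) ∧ (j ≠ i → ∀ w ∈ B j, g w ∉ F w) := by
    intro j
    by_cases hj : j = i
    · exact ⟨fun _ => ⟨0, hω1⟩, fun h => absurd hj h, fun h => absurd hj h⟩
    -- Hall's theorem on ↥(B j)
    have hall : ∀ s : Finset ↥(B j),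
        s.card ≤ (s.biUnion (fun b => Finset.univ \ F b.1)).card := by
      intro s
      rcases Nat.lt_or_ge s.card 2 with hs | hs
      · rcases Nat.lt_or_ge s.card 1 with hs0 | hs1
        · omega
        · -- s is nonempty
          obtain ⟨b, hb⟩ := Finset.card_pos.mp hs1
          have hsub : (Finset.univ \ F b.1) ⊆
              s.biUnion (fun b : ↥(B j) => Finset.univ \ F b.1) :=
            Finset.subset_biUnion_of_mem (fun b : ↥(B j) => Finset.univ \ F b.1) hb
          have hcu : (Finset.univ \ F b.1).card = ω - (F b.1).card := by
            rw [Finset.card_sdiff_of_subset (Finset.subset_univ _)]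
            simp
          have hle : 1 ≤ (Finset.univ \ F b.1).card := by
            rcases Finset.eq_empty_or_nonempty (F b.1) with hFe | hFne
            · rw [hcu, hFe]
              simpa using hω1
            · have h2 : 2 ≤ ω := hF2 j hj b.1 b.2 hFne
              have h3 := hFone b.1
              omega
          have h4 := Finset.card_le_card hsub
          omega
      · -- two distinct elements: the union of allowed sets is everything
        obtain ⟨b, hb, b', hb', hbb⟩ := Finset.one_lt_card.mp hs
        have huniv : s.biUnion (fun b => Finset.univ \ F b.1) = Finset.univ := by
          apply Finset.eq_univ_of_forall
          intro c
          rw [Finset.mem_biUnion]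
          by_cases hc : c ∈ F b.1
          · refine ⟨b', hb', ?_⟩
            rw [Finset.mem_sdiff]
            exact ⟨Finset.mem_univ _,
              hFdisj j hj b.1 b'.1 b.2 b'.2 (fun h => hbb (Subtype.ext h)) c hc⟩
          · exact ⟨b, hb, Finset.mem_sdiff.mpr ⟨Finset.mem_univ _, hc⟩⟩
        rw [huniv]
        calc s.card ≤ Fintype.card ↥(B j) := Finset.card_le_univ s
          _ = (B j).card := Fintype.card_coe _
          _ ≤ ω := hcard j
          _ = (Finset.univ : Finset (Fin ω)).card := by simp
    obtain ⟨ghat, hghat, hgmem⟩ :=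
      (Finset.all_card_le_biUnion_card_iff_exists_injective
        (fun b : ↥(B j) => Finset.univ \ F b.1)).mp hall
    refine ⟨fun w => if hw : w ∈ B j then ghat ⟨w, hw⟩ else ⟨0, hω1⟩, ?_, ?_⟩
    · intro _ w hw w' hw' hww'
      rw [Finset.mem_coe] at hw hw'
      simp only [dif_pos hw, dif_pos hw'] at hww'
      exact congrArg Subtype.val (hghat hww')
    · intro _ w hw
      simp only [dif_pos hw]
      have := hgmem ⟨w, hw⟩
      rw [Finset.mem_sdiff] at this
      exact this.2
  choose g hginj hgF using hG
  -- the central coloring as a total function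
  set cA' : ↥S → Fin ω := fun w => if hw : w ∈ B i then cA ⟨w, hw⟩ else ⟨0, hω1⟩ with hcA'
  -- the global coloring
  set col : ↥S → Fin ω := fun w => if w.1.1.2.2 = i then cA' w else g w.1.1.2.2 w with hcol
  -- validity
  have hvalid : ∀ {x y : ↥S}, H.Adj x y → col x ≠ col y := by
    have mixed : ∀ x y : ↥S, H.Adj x y → x.1.1.2.2 = i → y.1.1.2.2 ≠ i →
        col x ≠ col y := by
      intro x y hadj hx hy
      rw [hAdj] at hadj
      obtain ⟨hne, hor⟩ := hadj
      have hyb : y.1.1.1 = true := by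
        rcases hTm y with h | h
        · exact h
        · exact absurd h hy
      have hk : x.1.1.2.1 = y.1.1.2.1 ∧ x.1.1.1 = false := by
        rcases hor with ⟨h1, h2⟩ | ⟨h1, h2⟩
        · refine ⟨h1, ?_⟩
          rcases h2 with h | h
          · exact h
          · rw [h] at hyb; exact absurd hyb (by simp)
        · exact absurd (h1.symm.trans hx) hy
      have hxBi : x ∈ B i := (hmemB i x).mpr hx
      have hcolx : col x = cA ⟨x, hxBi⟩ := by
        rw [hcol]; simp only [if_pos hx, hcA', dif_pos hxBi]
      have hyBj : y ∈ B y.1.1.2.2 := (hmemB _ y).mpr rfl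
      have hcoly : col y = g y.1.1.2.2 y := by
        rw [hcol]; simp only [if_neg hy]
      have hmemF : col x ∈ F y := by
        rw [hFmem]
        refine ⟨⟨x, hxBi⟩, ?_, hcolx.symm⟩
        refine Prod.ext hk.2 (Prod.ext hk.1 hx)
      have hnotF : col y ∉ F y := by
        rw [hcoly]
        exact hgF y.1.1.2.2 hy y hyBj
      intro h
      rw [h] at hmemF
      exact hnotF hmemF
    intro x y hadj
    have hxy : x ≠ y := fun h => ((hAdj x y).mp hadj).1 (by rw [h])
    by_cases hx : x.1.1.2.2 = i
    · by_cases hy : y.1.1.2.2 = i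
      · -- both in central clique
        have hxBi : x ∈ B i := (hmemB i x).mpr hx
        have hyBi : y ∈ B i := (hmemB i y).mpr hy
        have hcolx : col x = cA ⟨x, hxBi⟩ := by
          rw [hcol]; simp only [if_pos hx, hcA', dif_pos hxBi]
        have hcoly : col y = cA ⟨y, hyBi⟩ := by
          rw [hcol]; simp only [if_pos hy, hcA', dif_pos hyBi]
        rw [hcolx, hcoly]
        intro h
        exact hxy (congrArg Subtype.val (hcA h))
      · exact mixed x y hadj hx hy
    · by_cases hy : y.1.1.2.2 = i
      · exact (mixed y x (hadj.symm) hy hx).symm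
      · -- both outside the central clique
        rw [hAdj] at hadj
        obtain ⟨hne, hor⟩ := hadj
        have hout : x.1.1.2.2 = y.1.1.2.2 := by
          rcases hor with ⟨h1, h2⟩ | ⟨h1, h2⟩
          · exfalso
            have hxb : x.1.1.1 = true := by
              rcases hTm x with h | h
              · exact h
              · exact absurd h hx
            have hybt : y.1.1.1 = true := by
              rcases hTm y with h | h
              · exact h
              · exact absurd h hy
            rcases h2 with h | h
            · rw [hxb] at h; simp at h
            · rw [hybt] at h; simp at h
          · exact h1
        have hcolx : col x = g x.1.1.2.2 x := by
          rw [hcol]; simp only [if_neg hx]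
        have hcoly : col y = g y.1.1.2.2 y := by
          rw [hcol]; simp only [if_neg hy]
        rw [hcolx, hcoly, ← hout]
        intro h
        exact hxy (hginj x.1.1.2.2 hx (Finset.mem_coe.mpr ((hmemB _ x).mpr rfl))
          (Finset.mem_coe.mpr ((hmemB _ y).mpr hout.symm)) h)
  exact ⟨⟨col, hvalid⟩⟩


theorem stmt6 (K N : ℕ) (hK : 0 < K) (hN : 0 < N) (i : Fin N) :
    ((ECG K N).induce {v : CGVert K N | v.1 = true ∨ v.2.2 = i}).IsPerfect := by
  intro S
  exact chromEq (key K N i S)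
end

section
/- Fix positive integers K, N and i ∈ {1,…,K}, and let G_i be the subgraph of the enhanced conflict graph G_{K,N} induced by all broadcast vertices together with the unicast vertices u_{ij} (j ∈ {1,…,N}) from input i. Then G_i contains no induced cycle of odd length at least 5 (no odd hole). -/
open SimpleGraph Pointwise

/-- Adjacency in a cycle graph, in terms of the underlying natural numbers. -/
lemma cycAdj {n p q : ℕ} (hn : 2 ≤ n) {hp : p < n} {hq : q < n} :
    (cycleGraph n).Adj ⟨p, hp⟩ ⟨q, hq⟩ ↔
      (p + 1 = q ∨ q + 1 = p ∨ (p = 0 ∧ q + 1 = n) ∨ (q = 0 ∧ p + 1 = n)) := by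
  have key : ∀ (a b : ℕ) (ha : a < n) (hb : b < n),
      ((⟨a, ha⟩ - ⟨b, hb⟩ : Fin n) : ℕ) = if b ≤ a then a - b else a + n - b := by
    intro a b ha hb
    rw [Fin.sub_def]
    simp only
    rcases le_or_gt b a with h | h
    · have h2 : n - b + a = (a - b) + n := by omega
      rw [if_pos h, h2, Nat.add_mod_right, Nat.mod_eq_of_lt (by omega)]
    · rw [if_neg (by omega), Nat.mod_eq_of_lt (by omega)]
      omega
  rw [cycleGraph_adj', key p q hp hq, key q p hq hp]
  split_ifs <;> omega

/-- Two distinct vertices of the enhanced conflict graph sharing an output are adjacent: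
each output class is a clique. -/
lemma ECG.adj_of_out {K N : ℕ} {v w : CGVert K N} (hne : v ≠ w) (hj : v.2.2 = w.2.2) :
    (ECG K N).Adj v w := by
  refine ⟨hne, ?_⟩
  by_cases hk : v.2.1 = w.2.1
  · rcases hbv : v.1 with _ | _
    · exact Or.inl ⟨hk, Or.inl rfl⟩
      
    · rcases hbw : w.1 with _ | _
      · exact Or.inl ⟨hk, Or.inr rfl⟩
      · exact absurd (Prod.ext (hbv.trans hbw.symm) (Prod.ext hk hj)) hne

  · exact Or.inr ⟨hj, hk⟩

/-- A broadcast vertex with input different from `i` can be adjacent to a vertex of the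
`i`-th induced subgraph only through a common output. -/
lemma ECG.out_eq_of_adj {K N : ℕ} {i : Fin K} {v w : CGVert K N} (hb : v.1 = true)
    (hk : v.2.1 ≠ i) (hw : w.1 = true ∨ w.2.1 = i) (h : (ECG K N).Adj v w) :
    v.2.2 = w.2.2 := by
  rcases h.2 with ⟨hkk, hbv | hbw⟩ | ⟨hj, _⟩
  · rw [hb] at hbv; exact absurd hbv (by simp)
  · rcases hw with hw | hw
    · rw [hw] at hbw; exact absurd hbw (by simp)
    · exact absurd (hkk.trans hw) hk
  · exact hj

/-- In the `i`-th induced subgraph, the middle vertex of an induced path of length two has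
input `i`. -/
lemma ECG.mid_input {K N : ℕ} {i : Fin K} {a v b : CGVert K N}
    (ma : a.1 = true ∨ a.2.1 = i) (mv : v.1 = true ∨ v.2.1 = i)
    (mb : b.1 = true ∨ b.2.1 = i) (hab : a ≠ b)
    (e1 : (ECG K N).Adj v a) (e2 : (ECG K N).Adj v b)
    (n : ¬ (ECG K N).Adj a b) : v.2.1 = i := by
  rcases mv with hb | h
  · by_cases hk : v.2.1 = i
    · exact hk
    · have h1 := ECG.out_eq_of_adj hb hk ma e1
      have h2 := ECG.out_eq_of_adj hb hk mb e2
      exact absurd (ECG.adj_of_out hab (h1.symm.trans h2)) n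
  · exact h

/-- Two distinct nonadjacent vertices with input `i` are both broadcast vertices. -/
lemma ECG.true_of_nonadj {K N : ℕ} {i : Fin K} {v w : CGVert K N}
    (hv : v.2.1 = i) (hw : w.2.1 = i) (hne : v ≠ w) (n : ¬ (ECG K N).Adj v w) :
    v.1 = true ∧ w.1 = true := by
  constructor
  · rcases hbv : v.1 with _ | _
    · exact absurd (show (ECG K N).Adj v w from
        ⟨hne, Or.inl ⟨hv.trans hw.symm, Or.inl hbv⟩⟩) n
    · rfl
  · rcases hbw : w.1 with _ | _
    · exact absurd (show (ECG K N).Adj v w from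
        ⟨hne, Or.inl ⟨hv.trans hw.symm, Or.inr hbw⟩⟩) n
    · rfl

/-- Two broadcast vertices with the same input are never adjacent. -/
lemma ECG.no_adj_BB {K N : ℕ} {i : Fin K} {v w : CGVert K N} (hv : v.1 = true)
    (hw : w.1 = true) (hvk : v.2.1 = i) (hwk : w.2.1 = i)
    (e : (ECG K N).Adj v w) : False := by
  rcases e.2 with ⟨_, hf | hf⟩ | ⟨_, hk⟩
  · rw [hv] at hf; exact absurd hf (by simp)
  · rw [hw] at hf; exact absurd hf (by simp)
  · exact hk (hvk.trans hwk.symm)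

/-- The `i`-th induced subgraph of `ECG K N` contains no induced 5-cycle. -/
lemma noC5 {K N : ℕ} {i : Fin K} (v0 v1 v2 v3 v4 : CGVert K N)
    (m0 : v0.1 = true ∨ v0.2.1 = i) (m1 : v1.1 = true ∨ v1.2.1 = i)
    (m2 : v2.1 = true ∨ v2.2.1 = i) (m3 : v3.1 = true ∨ v3.2.1 = i)
    (m4 : v4.1 = true ∨ v4.2.1 = i)
    (d02 : v0 ≠ v2) (d03 : v0 ≠ v3) (d13 : v1 ≠ v3) (d14 : v1 ≠ v4) (d24 : v2 ≠ v4)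
    (e01 : (ECG K N).Adj v0 v1) (e12 : (ECG K N).Adj v1 v2) (e23 : (ECG K N).Adj v2 v3)
    (e34 : (ECG K N).Adj v3 v4) (e40 : (ECG K N).Adj v4 v0)
    (n02 : ¬ (ECG K N).Adj v0 v2) (n03 : ¬ (ECG K N).Adj v0 v3)
    (n13 : ¬ (ECG K N).Adj v1 v3) (n14 : ¬ (ECG K N).Adj v1 v4)
    (n24 : ¬ (ECG K N).Adj v2 v4) : False := by
  have c0 : v0.2.1 = i :=
    ECG.mid_input m4 m0 m1 d14.symm e40.symm e01 (fun h => n14 h.symm)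
  have c1 : v1.2.1 = i := ECG.mid_input m0 m1 m2 d02 e01.symm e12 n02
  have c2 : v2.2.1 = i := ECG.mid_input m1 m2 m3 d13 e12.symm e23 n13
  have c3 : v3.2.1 = i := ECG.mid_input m2 m3 m4 d24 e23.symm e34 n24
  have t02 := ECG.true_of_nonadj c0 c2 d02 n02
  have t13 := ECG.true_of_nonadj c1 c3 d13 n13
  exact ECG.no_adj_BB t02.1 t13.1 c0 c1 e01

/-- The `i`-th induced subgraph of `ECG K N` contains no induced path on 6 vertices. -/
lemma noP6 {K N : ℕ} {i : Fin K} (v0 v1 v2 v3 v4 v5 : CGVert K N)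
    (m0 : v0.1 = true ∨ v0.2.1 = i) (m1 : v1.1 = true ∨ v1.2.1 = i)
    (m2 : v2.1 = true ∨ v2.2.1 = i) (m3 : v3.1 = true ∨ v3.2.1 = i)
    (m4 : v4.1 = true ∨ v4.2.1 = i) (m5 : v5.1 = true ∨ v5.2.1 = i)
    (d13 : v1 ≠ v3) (d24 : v2 ≠ v4) (d02 : v0 ≠ v2) (d35 : v3 ≠ v5)
    (e01 : (ECG K N).Adj v0 v1) (e12 : (ECG K N).Adj v1 v2) (e23 : (ECG K N).Adj v2 v3)
    (e34 : (ECG K N).Adj v3 v4) (e45 : (ECG K N).Adj v4 v5)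
    (n02 : ¬ (ECG K N).Adj v0 v2) (n13 : ¬ (ECG K N).Adj v1 v3)
    (n24 : ¬ (ECG K N).Adj v2 v4) (n35 : ¬ (ECG K N).Adj v3 v5) : False := by
  have c1 : v1.2.1 = i := ECG.mid_input m0 m1 m2 d02 e01.symm e12 n02
  have c2 : v2.2.1 = i := ECG.mid_input m1 m2 m3 d13 e12.symm e23 n13
  have c3 : v3.2.1 = i := ECG.mid_input m2 m3 m4 d24 e23.symm e34 n24
  have c4 : v4.2.1 = i := ECG.mid_input m3 m4 m5 d35 e34.symm e45 n35
  have t13 := ECG.true_of_nonadj c1 c3 d13 n13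
  have t24 := ECG.true_of_nonadj c2 c4 d24 n24
  exact ECG.no_adj_BB t13.1 t24.1 c1 c2 e12

theorem stmt10 (K N : ℕ) (hK : 0 < K) (hN : 0 < N) (i : Fin K) :
    ¬ ((ECG K N).induce {v : CGVert K N | v.1 = true ∨ v.2.1 = i}).HasOddHole := by
  rintro ⟨n, S, hn5, hodd, ⟨e⟩⟩
  let f : Fin n → CGVert K N := fun m => ((e.symm m).1).1
  have hmem : ∀ m, (f m).1 = true ∨ (f m).2.1 = i := fun m => ((e.symm m).1).2
  have hinj : Function.Injective f := fun a b hab =>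
    e.symm.injective (Subtype.ext (Subtype.ext hab))
  have hadj : ∀ a b : Fin n, (ECG K N).Adj (f a) (f b) ↔ (cycleGraph n).Adj a b := by
    intro a b
    rw [← e.symm.map_adj_iff]
    exact Iff.rfl
  obtain ⟨m, hm⟩ := hodd
  rcases eq_or_lt_of_le hn5 with h5 | h7
  · -- the 5-cycle case
    subst h5
    refine noC5 (i := i) (f ⟨0, by omega⟩) (f ⟨1, by omega⟩) (f ⟨2, by omega⟩)
      (f ⟨3, by omega⟩) (f ⟨4, by omega⟩) (hmem _) (hmem _) (hmem _) (hmem _) (hmem _)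
      ?_ ?_ ?_ ?_ ?_ ?_ ?_ ?_ ?_ ?_ ?_ ?_ ?_ ?_ ?_ <;>
      first
        | (intro h; exact absurd (hinj h) (by simp only [ne_eq, Fin.mk.injEq]; omega))
        | (rw [hadj, cycAdj (by omega)]; omega)
  · -- n is odd and bigger than 5, hence at least 7
    have h7' : 7 ≤ n := by omega
    refine noP6 (i := i) (f ⟨0, by omega⟩) (f ⟨1, by omega⟩) (f ⟨2, by omega⟩)
      (f ⟨3, by omega⟩) (f ⟨4, by omega⟩) (f ⟨5, by omega⟩)
      (hmem _) (hmem _) (hmem _) (hmem _) (hmem _) (hmem _)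
      ?_ ?_ ?_ ?_ ?_ ?_ ?_ ?_ ?_ ?_ ?_ ?_ ?_ <;>
      first
        | (intro h; exact absurd (hinj h) (by simp only [ne_eq, Fin.mk.injEq]; omega))
        | (rw [hadj, cycAdj (by omega)]; omega)
end

section
/- Let w ∈ ℝ^{V(G_{2,3})} be the vector assigning weight 1/2 to each of the five vertices u_{11}, b_{12}, u_{22}, u_{23}, b_{13} of the enhanced conflict graph G_{2,3} and weight 0 to every other vertex. Then w ∈ QSTAB(G_{2,3}), and for every real t with 0 ≤ t < 5/4, w ∉ t·STAB(G_{2,3}). In particular, min{t : QSTAB(G_{2,3}) ⊆ t·STAB(G_{2,3})} ≥ 5/4. -/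
open SimpleGraph Pointwise

/-- The weight vector assigning `1/2` to each of the five vertices
`u₁₁, b₁₂, u₂₂, u₂₃, b₁₃` of the odd hole of `G_{2,3}` and `0` elsewhere. -/
noncomputable def w23 : CGVert 2 3 → ℝ := fun v =>
  if v = (false, 0, 0) ∨ v = (true, 0, 1) ∨ v = (false, 1, 1) ∨ v = (false, 1, 2) ∨
      v = (true, 0, 2)
  then 1 / 2 else 0

/- auxiliary -/

instance : DecidableRel (ECG 2 3).Adj := fun v w =>
  inferInstanceAs (Decidable (v ≠ w ∧ ((v.2.1 = w.2.1 ∧ (v.1 = false ∨ w.1 = false)) ∨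
     (v.2.2 = w.2.2 ∧ v.2.1 ≠ w.2.1))))

def P23 (v : CGVert 2 3) : Prop :=
  v = (false, 0, 0) ∨ v = (true, 0, 1) ∨ v = (false, 1, 1) ∨ v = (false, 1, 2) ∨
      v = (true, 0, 2)

instance : DecidablePred P23 := fun _ => inferInstanceAs (Decidable (_ ∨ _))

lemma w23_eq (v : CGVert 2 3) : w23 v = if P23 v then (1/2 : ℝ) else 0 := by
  by_cases h : P23 v
  · rw [if_pos h]; unfold w23; exact if_pos h
  · rw [if_neg h]; unfold w23; exact if_neg h

lemma no_triangle : ∀ x y z : CGVert 2 3, P23 x → P23 y → P23 z → x ≠ y → x ≠ z → y ≠ z →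
    ¬((ECG 2 3).Adj x y ∧ (ECG 2 3).Adj x z ∧ (ECG 2 3).Adj y z) := by decide

noncomputable def fsum (x : CGVert 2 3 → ℝ) : ℝ :=
  x (false,0,0) + x (true,0,1) + x (false,1,1) + x (false,1,2) + x (true,0,2)

lemma fsum_w23 : fsum w23 = 5/2 := by
  have h : ∀ v, P23 v → w23 v = 1/2 := fun v h => by rw [w23_eq, if_pos h]
  rw [fsum, h _ (by decide), h _ (by decide), h _ (by decide), h _ (by decide), h _ (by decide)]
  norm_num

set_option maxHeartbeats 1000000 in
lemma stab_bound : ∀ x ∈ STAB (ECG 2 3), 0 ≤ fsum x ∧ fsum x ≤ 2 := by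
  have hsub : STAB (ECG 2 3) ⊆ {x : CGVert 2 3 → ℝ | 0 ≤ fsum x ∧ fsum x ≤ 2} := by
    apply convexHull_min
    · rintro y ⟨S, hS, rfl⟩
      classical
      have hab : ¬((false,0,0) ∈ S ∧ ((true,0,1) : CGVert 2 3) ∈ S) :=
        fun ⟨h1,h2⟩ => hS _ h1 _ h2 (by decide)
      have hbc : ¬((true,0,1) ∈ S ∧ ((false,1,1) : CGVert 2 3) ∈ S) :=
        fun ⟨h1,h2⟩ => hS _ h1 _ h2 (by decide)
      have hcd : ¬((false,1,1) ∈ S ∧ ((false,1,2) : CGVert 2 3) ∈ S) :=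
        fun ⟨h1,h2⟩ => hS _ h1 _ h2 (by decide)
      have hde : ¬((false,1,2) ∈ S ∧ ((true,0,2) : CGVert 2 3) ∈ S) :=
        fun ⟨h1,h2⟩ => hS _ h1 _ h2 (by decide)
      have hae : ¬((false,0,0) ∈ S ∧ ((true,0,2) : CGVert 2 3) ∈ S) :=
        fun ⟨h1,h2⟩ => hS _ h1 _ h2 (by decide)
      simp only [Set.mem_setOf_eq, fsum, Set.indicator_apply]
      split_ifs <;> first | (exfalso; tauto) | norm_num
    · intro u hu v hv α β hα hβ hαβ
      have he : fsum (α • u + β • v) = α * fsum u + β * fsum v := by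
        simp only [fsum, Pi.add_apply, Pi.smul_apply, smul_eq_mul]; ring
      rw [Set.mem_setOf_eq] at hu hv ⊢
      rw [he]
      obtain ⟨hu0, hu2⟩ := hu; obtain ⟨hv0, hv2⟩ := hv
      constructor <;> nlinarith
  exact fun x hx => hsub hx

lemma w23_mem_qstab : w23 ∈ QSTAB (ECG 2 3) := by
  constructor
  · intro v
    rw [w23_eq]
    split <;> norm_num
  · intro Q hQ
    classical
    have hcard : (Q.filter P23).card ≤ 2 := by
      by_contra h
      push_neg at h
      obtain ⟨x, hx, y, hy, z, hz, hxy, hxz, hyz⟩ := Finset.two_lt_card.mp h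
      rw [Finset.mem_filter] at hx hy hz
      exact no_triangle x y z hx.2 hy.2 hz.2 hxy hxz hyz
        ⟨hQ hx.1 hy.1 hxy, hQ hx.1 hz.1 hxz, hQ hy.1 hz.1 hyz⟩
    calc ∑ v ∈ Q, w23 v = ∑ v ∈ Q, if P23 v then (1/2:ℝ) else 0 := by
            exact Finset.sum_congr rfl fun v _ => w23_eq v
      _ = ∑ v ∈ Q.filter P23, (1/2:ℝ) := (Finset.sum_filter _ _).symm
      _ = (Q.filter P23).card * (1/2) := by rw [Finset.sum_const, nsmul_eq_mul]
      _ ≤ 2 * (1/2) := by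
            apply mul_le_mul_of_nonneg_right _ (by norm_num)
            exact_mod_cast hcard
      _ = 1 := by norm_num


lemma w23_not_mem (t : ℝ) (ht : t < 5/4) : w23 ∉ t • STAB (ECG 2 3) := by
  intro hmem
  obtain ⟨y, hy, hty⟩ := Set.mem_smul_set.mp hmem
  obtain ⟨h0, h2⟩ := stab_bound y hy
  have heq : t * fsum y = 5/2 := by
    have : fsum (t • y) = t * fsum y := by
      simp only [fsum, Pi.smul_apply, smul_eq_mul]; ring
    rw [← this, hty, fsum_w23]
  have hpos : 0 < fsum y := by
    rcases eq_or_lt_of_le h0 with h | h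
    · rw [← h, mul_zero] at heq; norm_num at heq
    · exact h
  nlinarith [mul_lt_mul_of_pos_right ht hpos]

theorem stmt18 :
    w23 ∈ QSTAB (ECG 2 3) ∧
    (∀ t : ℝ, 0 ≤ t → t < 5 / 4 → w23 ∉ t • STAB (ECG 2 3)) ∧
    (∀ t : ℝ, QSTAB (ECG 2 3) ⊆ t • STAB (ECG 2 3) → 5 / 4 ≤ t) := by
  refine ⟨w23_mem_qstab, fun t _ ht => w23_not_mem t ht, fun t hsub => ?_⟩
  by_contra h
  push_neg at h
  exact w23_not_mem t h (hsub w23_mem_qstab)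
end
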